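/- Let $F$ be a distribution function with survival function $\overline{F}(t) > 0$ for all $t$ such that $F$ is regularly varying at infinity with index $\gamma > 0$, i.e., $\overline{F}(at)/\overline{F}(t) \to a^{-\gamma}$ as $t \to \infty$ for all $a > 0$. Let $X_1, X_2, \ldots$ be i.i.d. with distribution $F$ and let $c_n = \overline{F}^{-1}(1/n)$ (the $(1-1/n)$-quantile). Then for every $t > 0$, $\lim_{n\to\infty} P\left(c_n^{-1} \max_{1\le i \le n} X_i \le t\right) = \exp(-t^{-\gamma})$. -/

import Mathlib

open MeasureTheory Filter

lemma aux_log_slope : Tendsto (fun y : ℝ => Real.log (1 + y) / y) (nhdsWithin 0 {0}ᶜ)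
    (nhds 1) := by
  have h := (Real.hasDerivAt_log one_ne_zero)
  rw [hasDerivAt_iff_tendsto_slope] at h
  have hmap : Tendsto (fun y : ℝ => 1 + y) (nhdsWithin 0 {0}ᶜ) (nhdsWithin 1 {1}ᶜ) := by
    apply tendsto_nhdsWithin_of_tendsto_nhds_of_eventually_within
    · have hcont : Continuous fun y : ℝ => 1 + y := by continuity
      simpa using (hcont.tendsto 0).mono_left nhdsWithin_le_nhds
    · filter_upwards [self_mem_nhdsWithin] with y hy
      simp only [Set.mem_compl_iff, Set.mem_singleton_iff] at hy ⊢
      intro hcon; apply hy; linarith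
  have := (h.comp hmap)
  simp only [inv_one] at this
  refine this.congr (fun y => ?_)
  simp [slope, Real.log_one, div_eq_inv_mul]

lemma aux_pow_exp (x : ℕ → ℝ) (a : ℝ) (hx : Tendsto x atTop (nhds a))
    (hpos : ∀ᶠ n in atTop, 0 < x n) :
    Tendsto (fun n : ℕ => (1 - x n / n) ^ n) atTop (nhds (Real.exp (-a))) := by
  have hn : Tendsto (fun n : ℕ => (n : ℝ)) atTop atTop := tendsto_natCast_atTop_atTop
  have hy : Tendsto (fun n : ℕ => -(x n) / n) atTop (nhds 0) := by
    have := (hx.neg).div_atTop hn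
    simpa using this
  have hy' : Tendsto (fun n : ℕ => -(x n) / n) atTop (nhdsWithin 0 {0}ᶜ) := by
    apply tendsto_nhdsWithin_of_tendsto_nhds_of_eventually_within _ hy
    filter_upwards [hpos, eventually_gt_atTop 0] with n h1 h2
    simp only [Set.mem_compl_iff, Set.mem_singleton_iff]
    have : (0:ℝ) < n := Nat.cast_pos.mpr h2
    intro hcon
    have : -(x n) = 0 := by field_simp at hcon; linarith [hcon]
    linarith
  have hL : Tendsto (fun n : ℕ => Real.log (1 + -(x n) / n) / (-(x n) / n)) atTop
      (nhds 1) := aux_log_slope.comp hy'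
  -- n * log (1 - x n / n) → -a
  have hmul : Tendsto (fun n : ℕ => (n : ℝ) * Real.log (1 - x n / n)) atTop (nhds (-a)) := by
    have h1 : Tendsto (fun n : ℕ => (-(x n)) *
        (Real.log (1 + -(x n) / n) / (-(x n) / n))) atTop (nhds (-a * 1)) :=
      (hx.neg).mul hL
    rw [mul_one] at h1
    refine h1.congr' ?_
    filter_upwards [hpos, eventually_gt_atTop 0] with n h1 h2
    have hn0 : (0:ℝ) < n := Nat.cast_pos.mpr h2
    have hxne : -(x n) ≠ 0 := by linarith
    have : (1 : ℝ) + -(x n) / n = 1 - x n / n := by ring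
    rw [this]
    field_simp
  have hexp := (Real.continuous_exp.tendsto _).comp hmul
  refine hexp.congr' ?_
  have hsmall : Tendsto (fun n : ℕ => x n / n) atTop (nhds 0) := by
    simpa using hx.div_atTop hn
  have hev : ∀ᶠ n in atTop, x n / (n : ℝ) < 1 :=
    hsmall.eventually (eventually_lt_nhds (by norm_num : (0:ℝ) < 1))
  filter_upwards [hev] with n hlt
  have hpos' : (0:ℝ) < 1 - x n / n := by linarith
  simp only [Function.comp_apply]
  rw [mul_comm, Real.exp_mul, Real.exp_log hpos', Real.rpow_natCast]

theorem stmt_14 {Ω : Type*} [MeasurableSpace Ω] (μ : Measure Ω) [IsProbabilityMeasure μ]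
    (γ : ℝ) (hγ : 0 < γ)
    (F : ℝ → ℝ) (hsurv : ∀ t, 1 - F t > 0)
    (hRV : ∀ a : ℝ, 0 < a →
      Tendsto (fun t : ℝ => (1 - F (a * t)) / (1 - F t)) atTop (nhds (a ^ (-γ))))
    (X : ℕ → Ω → ℝ) (hX : ∀ i, Measurable (X i))
    (hindep : ProbabilityTheory.iIndepFun X μ)
    (hcdf : ∀ i t, μ {ω | X i ω ≤ t} = ENNReal.ofReal (F t))
    (c : ℕ → ℝ) (hc : ∀ n : ℕ, 1 ≤ n → 1 - F (c n) = 1 / n) (hcpos : ∀ n, 0 < c n) :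
    ∀ t : ℝ, 0 < t →
      Tendsto (fun n : ℕ => (μ {ω | ∀ i < n, X i ω ≤ c n * t}).toReal) atTop
        (nhds (Real.exp (-(t ^ (-γ))))) := by
  intro t ht
  -- F is "monotone where positive"
  have hFmono : ∀ s u : ℝ, s ≤ u → 0 < F s → F s ≤ F u := by
    intro s u hsu hFs
    have h1 : μ {ω | X 0 ω ≤ s} ≤ μ {ω | X 0 ω ≤ u} := by
      apply measure_mono
      intro ω hω
      exact le_trans hω hsu
    rw [hcdf 0 s, hcdf 0 u] at h1
    by_contra hcon
    push_neg at hcon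
    have hFu : 0 ≤ F u := by
      by_contra h
      push_neg at h
      rw [ENNReal.ofReal_eq_zero.mpr h.le] at h1
      simp only [nonpos_iff_eq_zero, ENNReal.ofReal_eq_zero] at h1
      linarith
    rw [ENNReal.ofReal_le_ofReal_iff hFu] at h1
    linarith
  -- c n → ∞
  have hclim : Tendsto c atTop atTop := by
    rw [tendsto_atTop]
    intro M
    have hFM : F M < 1 := by linarith [hsurv M]
    obtain ⟨N, hN⟩ := exists_nat_gt (1 / (1 - F M))
    filter_upwards [eventually_ge_atTop (max N 2)] with n hn
    have hn2 : 2 ≤ n := le_trans (le_max_right N 2) hn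
    have hnN : N ≤ n := le_trans (le_max_left N 2) hn
    by_contra hcon
    push_neg at hcon
    have hFcn : F (c n) = 1 - 1 / n := by
      have := hc n (by omega); linarith
    have hpos : 0 < F (c n) := by
      rw [hFcn]
      have : (1:ℝ)/n ≤ 1/2 := by
        apply div_le_div_of_nonneg_left (by norm_num) (by norm_num)
        exact_mod_cast hn2
      linarith
    have := hFmono (c n) M hcon.le hpos
    rw [hFcn] at this
    -- 1 - 1/n ≤ F M, so 1/(1-F M) ≥ n
    have h1 : 1 - F M ≤ 1 / n := by linarith
    have hnpos : (0:ℝ) < n := by positivity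
    have h2 : (n:ℝ) ≤ 1 / (1 - F M) := by
      rw [le_div_iff₀ (by linarith [hsurv M])]
      have h3 := mul_le_mul_of_nonneg_left h1 hnpos.le
      rw [mul_one_div, div_self hnpos.ne'] at h3
      linarith
    have : (N:ℝ) ≤ (n:ℝ) := by exact_mod_cast hnN
    linarith
  -- x n := n * (1 - F (c n * t)) tends to t^(-γ)
  set x : ℕ → ℝ := fun n => n * (1 - F (c n * t)) with hxdef
  have hx : Tendsto x atTop (nhds (t ^ (-γ))) := by
    have h1 := (hRV t ht).comp hclim
    refine h1.congr' ?_
    filter_upwards [eventually_ge_atTop 1] with n hn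
    have hne : (1:ℝ) - F (c n) = 1 / n := hc n hn
    simp only [Function.comp_apply, hne, hxdef]
    rw [mul_comm t (c n)]
    have hnpos : (0:ℝ) < n := by exact_mod_cast hn
    field_simp
  have hxpos : ∀ᶠ n in atTop, 0 < x n := by
    filter_upwards [eventually_ge_atTop 1] with n hn
    have hnpos : (0:ℝ) < n := by exact_mod_cast hn
    exact mul_pos hnpos (hsurv (c n * t))
  -- measure formula
  have hmeas : ∀ n : ℕ, μ {ω | ∀ i < n, X i ω ≤ c n * t}
      = ENNReal.ofReal (F (c n * t)) ^ n := by
    intro n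
    have hset : {ω | ∀ i < n, X i ω ≤ c n * t}
        = ⋂ i ∈ Finset.range n, X i ⁻¹' Set.Iic (c n * t) := by
      ext ω
      simp [Set.mem_iInter]
    rw [hset, hindep.meas_biInter (fun i _ => ⟨Set.Iic (c n * t), measurableSet_Iic, rfl⟩)]
    have : ∀ i ∈ Finset.range n, μ (X i ⁻¹' Set.Iic (c n * t))
        = ENNReal.ofReal (F (c n * t)) := fun i _ => hcdf i (c n * t)
    rw [Finset.prod_congr rfl this, Finset.prod_const, Finset.card_range]
  -- conclude
  have hlim := aux_pow_exp x (t ^ (-γ)) hx hxpos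
  refine hlim.congr' ?_
  have hn : Tendsto (fun n : ℕ => (n : ℝ)) atTop atTop := tendsto_natCast_atTop_atTop
  have hsmall : Tendsto (fun n : ℕ => x n / n) atTop (nhds 0) := by
    simpa using hx.div_atTop hn
  have hev : ∀ᶠ n in atTop, x n / (n : ℝ) < 1/2 :=
    hsmall.eventually (eventually_lt_nhds (by norm_num : (0:ℝ) < 1/2))
  filter_upwards [hev, eventually_ge_atTop 1] with n hlt hn1
  have hnpos : (0:ℝ) < n := by exact_mod_cast hn1
  have hFeq : F (c n * t) = 1 - x n / n := by
    simp only [hxdef]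
    field_simp
    ring
  have hFpos : 0 ≤ F (c n * t) := by rw [hFeq]; linarith
  rw [hmeas n, ENNReal.toReal_pow, ENNReal.toReal_ofReal hFpos, hFeq]
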